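/- Let K ⊆ ℝ^d be a set of diameter at most D (i.e. ‖u − v‖ ≤ D for all u, v ∈ K), let w_1,…,w_T ∈ K, and with weights α_t = t define x_t = (Σ_{i=1}^t i·w_i)/(t(t+1)/2). Then for every t with 1 ≤ t ≤ T and every integer τ with 0 ≤ τ ≤ t − 1, one has ‖x_t − x_{t−τ}‖ ≤ 8·τ·D/t. -/

import Mathlib

open Finset

lemma sum_Icc_id_real (n : ℕ) : ∑ i ∈ Finset.Icc 1 n, (i : ℝ) = n * (n + 1) / 2 := by
  induction n with
  | zero => simp
  | succ n ih =>
    rw [Finset.sum_Icc_succ_top (by omega), ih]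
    push_cast
    ring

theorem stmt_5 {d T : ℕ} (K : Set (EuclideanSpace ℝ (Fin d))) (D : ℝ)
    (hD : ∀ u ∈ K, ∀ v ∈ K, ‖u - v‖ ≤ D)
    (w x : ℕ → EuclideanSpace ℝ (Fin d))
    (hw : ∀ t ∈ Icc 1 T, w t ∈ K)
    (hx : ∀ t ∈ Icc 1 T, x t = ((t * (t + 1) : ℝ) / 2)⁻¹ • ∑ i ∈ Icc 1 t, (i : ℝ) • w i) :
    ∀ t ∈ Icc 1 T, ∀ τ : ℕ, τ ≤ t - 1 →
      ‖x t - x (t - τ)‖ ≤ 8 * τ * D / t := by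
  intro t ht τ hτ
  simp only [mem_Icc] at ht
  obtain ⟨ht1, htT⟩ := ht
  set s := t - τ with hs
  have hs1 : 1 ≤ s := by omega
  have hst : s ≤ t := by omega
  have hsT : s ≤ T := by omega
  have hD0 : 0 ≤ D := by
    have h1 := hD (w 1) (hw 1 (by simp; omega)) (w 1) (hw 1 (by simp; omega))
    simpa using h1
  set At : ℝ := (t * (t + 1) : ℝ) / 2 with hAt
  set As : ℝ := (s * (s + 1) : ℝ) / 2 with hAs
  have ht0 : (0:ℝ) < t := by exact_mod_cast Nat.pos_of_ne_zero (by omega)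
  have hs0 : (0:ℝ) < s := by exact_mod_cast Nat.pos_of_ne_zero (by omega)
  have hAt0 : (0:ℝ) < At := by rw [hAt]; positivity
  have hAs0 : (0:ℝ) < As := by rw [hAs]; positivity
  have hxt := hx t (by simp; omega)
  have hxs := hx s (by simp; omega)
  have hAtx : At • x t = ∑ i ∈ Icc 1 t, (i : ℝ) • w i := by
    rw [hxt, smul_inv_smul₀ hAt0.ne']
  have hAsx : As • x s = ∑ i ∈ Icc 1 s, (i : ℝ) • w i := by
    rw [hxs, smul_inv_smul₀ hAs0.ne']
  -- bound on ‖w i - x s‖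
  have key : ∀ i ∈ Icc 1 t, ‖w i - x s‖ ≤ D := by
    intro i hi
    simp only [mem_Icc] at hi
    have hwi := hw i (by simp; omega)
    have expand : ∑ j ∈ Icc 1 s, (j:ℝ) • (w i - w j)
        = As • w i - ∑ j ∈ Icc 1 s, (j:ℝ) • w j := by
      rw [hAs, ← sum_Icc_id_real s, Finset.sum_smul, ← Finset.sum_sub_distrib]
      exact Finset.sum_congr rfl fun j _ => smul_sub _ _ _
    have hrepr : w i - x s = As⁻¹ • ∑ j ∈ Icc 1 s, (j:ℝ) • (w i - w j) := by
      rw [expand, smul_sub, inv_smul_smul₀ hAs0.ne', hxs, hAs]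
    calc ‖w i - x s‖ = As⁻¹ * ‖∑ j ∈ Icc 1 s, (j:ℝ) • (w i - w j)‖ := by
          rw [hrepr, norm_smul, norm_inv, Real.norm_of_nonneg hAs0.le]
      _ ≤ As⁻¹ * ∑ j ∈ Icc 1 s, (j:ℝ) * D := by
          refine mul_le_mul_of_nonneg_left ((norm_sum_le _ _).trans ?_)
            (inv_nonneg.mpr hAs0.le)
          refine Finset.sum_le_sum fun j hj => ?_
          simp only [mem_Icc] at hj
          rw [norm_smul, Real.norm_natCast]
          exact mul_le_mul_of_nonneg_left
            (hD _ hwi _ (hw j (by simp; omega))) (Nat.cast_nonneg j)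
      _ = D := by
          rw [← Finset.sum_mul, sum_Icc_id_real, hAs]
          field_simp
  -- the splitting
  have hIcc_t : Icc 1 t = Ioc 0 t := by rw [← Finset.Icc_add_one_left_eq_Ioc]; rfl
  have hIcc_s : Icc 1 s = Ioc 0 s := by rw [← Finset.Icc_add_one_left_eq_Ioc]; rfl
  have hsum_id : ∑ i ∈ Ioc s t, (i:ℝ) = At - As := by
    have := Finset.sum_Ioc_consecutive (fun i : ℕ => (i:ℝ)) (Nat.zero_le s) hst
    rw [← hIcc_s, ← hIcc_t, sum_Icc_id_real, sum_Icc_id_real] at this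
    rw [hAt, hAs]
    linarith
  have hsplit : ∑ i ∈ Ioc s t, (i:ℝ) • w i
      = ∑ i ∈ Icc 1 t, (i:ℝ) • w i - ∑ i ∈ Icc 1 s, (i:ℝ) • w i := by
    have := Finset.sum_Ioc_consecutive (fun i : ℕ => (i:ℝ) • w i) (Nat.zero_le s) hst
    rw [← hIcc_s, ← hIcc_t] at this
    rw [← this]
    abel
  have hrep : x t - x s = At⁻¹ • ∑ i ∈ Ioc s t, (i:ℝ) • (w i - x s) := by
    have h1 : ∑ i ∈ Ioc s t, (i:ℝ) • (w i - x s) = At • (x t - x s) := by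
      have e1 : ∑ i ∈ Ioc s t, (i:ℝ) • (w i - x s)
          = ∑ i ∈ Ioc s t, (i:ℝ) • w i - (∑ i ∈ Ioc s t, (i:ℝ)) • x s := by
        rw [Finset.sum_smul, ← Finset.sum_sub_distrib]
        exact Finset.sum_congr rfl fun j _ => smul_sub _ _ _
      rw [e1, hsplit, hsum_id, ← hAtx, ← hAsx, sub_smul, smul_sub]
      abel
    rw [h1, inv_smul_smul₀ hAt0.ne']
  -- norm bound
  have hbound : ‖x t - x s‖ ≤ At⁻¹ * ((At - As) * D) := by
    rw [hrep, norm_smul, norm_inv, Real.norm_of_nonneg hAt0.le]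
    refine mul_le_mul_of_nonneg_left ?_ (inv_nonneg.mpr hAt0.le)
    calc ‖∑ i ∈ Ioc s t, (i:ℝ) • (w i - x s)‖ ≤ ∑ i ∈ Ioc s t, (i:ℝ) * D := by
          refine (norm_sum_le _ _).trans (Finset.sum_le_sum fun i hi => ?_)
          simp only [mem_Ioc] at hi
          rw [norm_smul, Real.norm_natCast]
          exact mul_le_mul_of_nonneg_left (key i (by simp; omega)) (Nat.cast_nonneg i)
      _ = (At - As) * D := by rw [← Finset.sum_mul, hsum_id]
  refine hbound.trans ?_
  -- arithmetic
  have hcast : (s:ℝ) = (t:ℝ) - (τ:ℝ) := by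
    rw [hs]; push_cast [Nat.cast_sub (by omega : τ ≤ t)]; ring
  have hτ0 : (0:ℝ) ≤ τ := Nat.cast_nonneg τ
  have h1 : (1:ℝ) ≤ t := by exact_mod_cast ht1
  have hfrac : (At - As) / At ≤ 2 * τ / t := by
    rw [div_le_div_iff₀ hAt0 ht0, hAt, hAs, hcast]
    nlinarith [hτ0, h1, sq_nonneg ((τ:ℝ))]
  calc At⁻¹ * ((At - As) * D) = (At - As) / At * D := by ring
    _ ≤ 2 * τ / t * D := mul_le_mul_of_nonneg_right hfrac hD0
    _ ≤ 8 * τ * D / t := by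
        rw [div_mul_eq_mul_div, div_le_div_iff₀ ht0 ht0]
        nlinarith [mul_nonneg (mul_nonneg hτ0 hD0) ht0.le]
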